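/- arXiv:2001.09611 — 2 statements merged into one kernel-verified Lean document; each statement's English description precedes it below -/
import Mathlib

section
/- If the network (α, μ, P) contains an isolated communicating class, then the traffic equation λ = α + (λ ∧ μ)P admits a solution λ that has at least one strictly negative entry. Consequently, (α, μ, P) is non-isolated if and only if every solution of the traffic equation is nonnegative. -/
open scoped Classical

/-- `i` and `j` communicate under the nonnegative matrix `P`. -/
def Communicates {n : ℕ} (P : Matrix (Fin n) (Fin n) ℝ) (i j : Fin n) : Prop :=
  i = j ∨ ((∃ k ≥ 1, 0 < (P ^ k) i j) ∧ (∃ l ≥ 1, 0 < (P ^ l) j i))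

/-- `C` is a communicating class of `P`. -/
def IsCommClass {n : ℕ} (P : Matrix (Fin n) (Fin n) ℝ) (C : Set (Fin n)) : Prop :=
  ∃ i, C = {j | Communicates P i j}

/-- The class `C` can be filled: exogenous input reaches it directly or
through routing. -/
def CanBeFilled {n : ℕ} (α : Fin n → ℝ) (P : Matrix (Fin n) (Fin n) ℝ)
    (C : Set (Fin n)) : Prop :=
  (∃ i ∈ C, 0 < α i) ∨ (∃ j, 0 < α j ∧ ∃ l ∈ C, ∃ k ≥ 1, 0 < (P ^ k) j l)

/-- The class `C` can be drained: externally (a row sum in `C` is `< 1`) or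
internally (positive routing out of `C`). -/
def CanBeDrained {n : ℕ} (P : Matrix (Fin n) (Fin n) ℝ) (C : Set (Fin n)) : Prop :=
  (∃ i ∈ C, ∑ j, P i j < 1) ∨ (∃ i ∈ C, ∃ j ∉ C, 0 < P i j)

/-- The network `(α, μ, P)` is non-isolated (NI): every communicating class of
`P` can be filled or drained. -/
def NI {n : ℕ} (α : Fin n → ℝ) (P : Matrix (Fin n) (Fin n) ℝ) : Prop :=
  ∀ C, IsCommClass P C → CanBeFilled α P C ∨ CanBeDrained P C

namespace TEaux


variable {n : ℕ}

lemma pow_entry_nonneg (P : Matrix (Fin n) (Fin n) ℝ) (hP : ∀ i j, 0 ≤ P i j) :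
    ∀ (k : ℕ) (i j : Fin n), 0 ≤ (P ^ k) i j := by
  intro k
  induction k with
  | zero => intro i j; rw [pow_zero, Matrix.one_apply]; split <;> norm_num
  | succ k ih =>
      intro i j
      rw [pow_succ, Matrix.mul_apply]
      exact Finset.sum_nonneg fun m _ => mul_nonneg (ih i m) (hP m j)

lemma pos_pos_of_mul_pos {a b : ℝ} (ha : 0 ≤ a) (hb : 0 ≤ b) (h : 0 < a * b) :
    0 < a ∧ 0 < b := by
  constructor
  · rcases ha.eq_or_lt with e | e
    · rw [← e, zero_mul] at h; linarith
    · exact e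
  · rcases hb.eq_or_lt with e | e
    · rw [← e, mul_zero] at h; linarith
    · exact e

lemma pow_mul_pos (P : Matrix (Fin n) (Fin n) ℝ) (hP : ∀ i j, 0 ≤ P i j)
    {a b : ℕ} {i j k : Fin n} (h1 : 0 < (P ^ a) i j) (h2 : 0 < (P ^ b) j k) :
    0 < (P ^ (a + b)) i k := by
  rw [pow_add, Matrix.mul_apply]
  exact Finset.sum_pos'
    (fun m _ => mul_nonneg (pow_entry_nonneg P hP a i m) (pow_entry_nonneg P hP b m k))
    ⟨j, Finset.mem_univ j, mul_pos h1 h2⟩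

lemma pow_decomp_right (P : Matrix (Fin n) (Fin n) ℝ) (hP : ∀ i j, 0 ≤ P i j)
    {k : ℕ} {i j : Fin n} (h : 0 < (P ^ (k + 1)) i j) :
    ∃ m, 0 < (P ^ k) i m ∧ 0 < P m j := by
  rw [pow_succ, Matrix.mul_apply] at h
  by_contra hc
  push_neg at hc
  have : ∀ m ∈ Finset.univ, (P ^ k) i m * P m j = 0 := by
    intro m _
    rcases (pow_entry_nonneg P hP k i m).eq_or_lt with e | e
    · rw [← e, zero_mul]
    · have := hc m e
      have : P m j = 0 := le_antisymm this (hP m j)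
      rw [this, mul_zero]
  rw [Finset.sum_eq_zero this] at h
  exact lt_irrefl 0 h

lemma pow_decomp_left (P : Matrix (Fin n) (Fin n) ℝ) (hP : ∀ i j, 0 ≤ P i j)
    {k : ℕ} {i j : Fin n} (h : 0 < (P ^ (k + 1)) i j) :
    ∃ m, 0 < P i m ∧ 0 < (P ^ k) m j := by
  rw [pow_succ', Matrix.mul_apply] at h
  by_contra hc
  push_neg at hc
  have : ∀ m ∈ Finset.univ, P i m * (P ^ k) m j = 0 := by
    intro m _
    rcases (hP i m).eq_or_lt with e | e
    · rw [← e, zero_mul]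
    · have := hc m e
      have : (P ^ k) m j = 0 := le_antisymm this (pow_entry_nonneg P hP k m j)
      rw [this, mul_zero]
  rw [Finset.sum_eq_zero this] at h
  exact lt_irrefl 0 h

/-- reachability (reflexive + positive path) -/
def Reach (P : Matrix (Fin n) (Fin n) ℝ) (i j : Fin n) : Prop :=
  i = j ∨ ∃ k ≥ 1, 0 < (P ^ k) i j

lemma Reach.refl (P : Matrix (Fin n) (Fin n) ℝ) (i : Fin n) : Reach P i i := Or.inl rfl

lemma Reach.trans' (P : Matrix (Fin n) (Fin n) ℝ) (hP : ∀ i j, 0 ≤ P i j)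
    {i j k : Fin n} (h1 : Reach P i j) (h2 : Reach P j k) : Reach P i k := by
  rcases h1 with rfl | ⟨a, ha, hpa⟩
  · exact h2
  rcases h2 with rfl | ⟨b, hb, hpb⟩
  · exact Or.inr ⟨a, ha, hpa⟩
  · exact Or.inr ⟨a + b, le_trans ha (Nat.le_add_right a b), pow_mul_pos P hP hpa hpb⟩

lemma reach_of_edge (P : Matrix (Fin n) (Fin n) ℝ) {i j : Fin n} (h : 0 < P i j) :
    Reach P i j := Or.inr ⟨1, le_refl 1, by rwa [pow_one]⟩

lemma comm_to_reach (P : Matrix (Fin n) (Fin n) ℝ) {i j : Fin n}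
    (h : Communicates P i j) : Reach P i j := by
  rcases h with rfl | ⟨h1, _⟩
  · exact Or.inl rfl
  · exact Or.inr h1

lemma comm_of_reach (P : Matrix (Fin n) (Fin n) ℝ) {i j : Fin n}
    (h1 : Reach P i j) (h2 : Reach P j i) : Communicates P i j := by
  by_cases e : i = j
  · exact Or.inl e
  · rcases h1 with rfl | h1
    · exact Or.inl rfl
    rcases h2 with rfl | h2
    · exact Or.inl rfl
    · exact Or.inr ⟨h1, h2⟩


open Filter Topology

lemma exists_minimal_solution {n : ℕ} (α μ : Fin n → ℝ) (P : Matrix (Fin n) (Fin n) ℝ)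
    (hα : ∀ i, 0 ≤ α i) (hμ : ∀ i, 0 < μ i) (hP : ∀ i j, 0 ≤ P i j)
    (B : Set (Fin n)) (hBα : ∀ i ∈ B, α i = 0)
    (hBclosed : ∀ j i, i ∈ B → 0 < P j i → j ∈ B) :
    ∃ lam0 : Fin n → ℝ,
      (∀ i, lam0 i = α i + ∑ j, min (lam0 j) (μ j) * P j i) ∧
      (∀ i, 0 ≤ lam0 i) ∧ (∀ i ∈ B, lam0 i = 0) := by
  set T : (Fin n → ℝ) → (Fin n → ℝ) :=
    fun l i => α i + ∑ j, min (l j) (μ j) * P j i with hT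
  have Tmono : ∀ a b : Fin n → ℝ, (∀ j, a j ≤ b j) → ∀ i, T a i ≤ T b i := by
    intro a b hab i
    refine add_le_add_right (Finset.sum_le_sum fun j _ => ?_) _
    exact mul_le_mul_of_nonneg_right (min_le_min (hab j) le_rfl) (hP j i)
  set f : ℕ → (Fin n → ℝ) := fun k => T^[k] (fun _ => 0) with hf
  have hf0 : f 0 = fun _ => 0 := rfl
  have hfs : ∀ k, f (k + 1) = T (f k) := by
    intro k; rw [hf]; exact Function.iterate_succ_apply' T k _
  have hfnonneg : ∀ k i, 0 ≤ f k i := by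
    intro k
    induction k with
    | zero => intro i; simp [hf0]
    | succ k ih =>
        intro i
        rw [hfs]
        refine add_nonneg (hα i) (Finset.sum_nonneg fun j _ => ?_)
        exact mul_nonneg (le_min (ih j) (hμ j).le) (hP j i)
  have hmono : ∀ k i, f k i ≤ f (k + 1) i := by
    intro k
    induction k with
    | zero => intro i; rw [hf0]; exact hfnonneg 1 i
    | succ k ih =>
        intro i
        rw [hfs, hfs]
        exact Tmono _ _ ih i
  have hmono' : ∀ i, Monotone fun k => f k i := by
    intro i
    exact monotone_nat_of_le_succ fun k => hmono k i
  set M : Fin n → ℝ := fun i => α i + ∑ j, μ j * P j i with hM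
  have hbound : ∀ k i, f k i ≤ M i := by
    intro k
    cases k with
    | zero =>
        intro i
        rw [hf0]
        exact add_nonneg (hα i)
          (Finset.sum_nonneg fun j _ => mul_nonneg (hμ j).le (hP j i))
    | succ k =>
        intro i
        rw [hfs]
        refine add_le_add_right (Finset.sum_le_sum fun j _ => ?_) _
        exact mul_le_mul_of_nonneg_right (min_le_right _ _) (hP j i)
  have hbdd : ∀ i, BddAbove (Set.range fun k => f k i) := by
    intro i
    exact ⟨M i, by rintro x ⟨k, rfl⟩; exact hbound k i⟩
  set lam0 : Fin n → ℝ := fun i => ⨆ k, f k i with hlam0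
  have htend : ∀ i, Tendsto (fun k => f k i) atTop (𝓝 (lam0 i)) := by
    intro i
    exact tendsto_atTop_ciSup (hmono' i) (hbdd i)
  have htend1 : ∀ i, Tendsto (fun k => f (k + 1) i) atTop (𝓝 (lam0 i)) := by
    intro i
    exact (htend i).comp (tendsto_add_atTop_nat 1)
  have htend2 : ∀ i, Tendsto (fun k => T (f k) i) atTop (𝓝 (T lam0 i)) := by
    intro i
    rw [hT]
    refine Tendsto.const_add _ (tendsto_finset_sum _ fun j _ => ?_)
    exact Tendsto.mul_const _ ((htend j).min tendsto_const_nhds)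
  have hfix : ∀ i, lam0 i = T lam0 i := by
    intro i
    refine tendsto_nhds_unique ?_ (htend2 i)
    have : (fun k => f (k + 1) i) = fun k => T (f k) i := by
      funext k; rw [hfs]
    rw [← this]
    exact htend1 i
  have hBzero : ∀ k, ∀ i ∈ B, f k i = 0 := by
    intro k
    induction k with
    | zero => intro i _; simp [hf0]
    | succ k ih =>
        intro i hi
        rw [hfs]
        show α i + ∑ j, min (f k j) (μ j) * P j i = 0
        rw [hBα i hi, Finset.sum_eq_zero, add_zero]
        intro j _
        rcases (hP j i).eq_or_lt with e | e
        · rw [← e, mul_zero]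
        · rw [ih j (hBclosed j i hi e), min_eq_left (hμ j).le, zero_mul]
  refine ⟨lam0, fun i => hfix i, fun i => ?_, fun i hi => ?_⟩
  · have := le_ciSup (hbdd i) 0
    simpa [hlam0, hf0] using this
  · have : ∀ k, f k i = 0 := fun k => hBzero k i hi
    rw [hlam0]
    simp only [this]
    exact ciSup_const

lemma partA {n : ℕ} (α μ : Fin n → ℝ) (P : Matrix (Fin n) (Fin n) ℝ)
    (hα : ∀ i, 0 ≤ α i) (hμ : ∀ i, 0 < μ i)
    (hP : ∀ i j, 0 ≤ P i j) (hPsub : ∀ i, ∑ j, P i j ≤ 1)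
    (C : Set (Fin n)) (hC : IsCommClass P C)
    (hF : ¬ CanBeFilled α P C) (hD : ¬ CanBeDrained P C) :
    ∃ lam : Fin n → ℝ,
      (∀ i, lam i = α i + ∑ j, min (lam j) (μ j) * P j i) ∧ ∃ i, lam i < 0 := by
  obtain ⟨i₀, hi₀⟩ := hC
  have hi₀C : i₀ ∈ C := by rw [hi₀]; exact Or.inl rfl
  rw [CanBeFilled] at hF; push_neg at hF
  obtain ⟨hF1, hF2⟩ := hF
  rw [CanBeDrained] at hD; push_neg at hD
  obtain ⟨hD1, hD2⟩ := hD
  -- basic structure facts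
  have hrow1 : ∀ i ∈ C, ∑ j, P i j = 1 := fun i hi => le_antisymm (hPsub i) (hD1 i hi)
  have hout : ∀ i ∈ C, ∀ j, j ∉ C → P i j = 0 :=
    fun i hi j hj => le_antisymm (hD2 i hi j hj) (hP i j)
  have hαC : ∀ i ∈ C, α i = 0 := fun i hi => le_antisymm (hF1 i hi) (hα i)
  -- the basin
  set B : Set (Fin n) := {i | i ∈ C ∨ ∃ l ∈ C, ∃ k ≥ 1, 0 < (P ^ k) i l} with hB
  have hCB : ∀ i ∈ C, i ∈ B := fun i hi => Or.inl hi
  have hBα : ∀ i ∈ B, α i = 0 := by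
    rintro i (hi | ⟨l, hl, k, hk, hpos⟩)
    · exact hαC i hi
    · rcases (hα i).eq_or_lt with e | e
      · exact e.symm
      · exact absurd hpos (not_lt.mpr (hF2 i e l hl k hk))
  have hBclosed : ∀ j i, i ∈ B → 0 < P j i → j ∈ B := by
    rintro j i (hi | ⟨l, hl, k, hk, hpos⟩) hji
    · exact Or.inr ⟨i, hi, 1, le_refl 1, by rwa [pow_one]⟩
    · exact Or.inr ⟨l, hl, 1 + k, le_trans (le_refl 1) (Nat.le_add_right 1 k),
        pow_mul_pos P hP (by rwa [pow_one]) hpos⟩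
  obtain ⟨lam0, hlam0eq, hlam0nn, hlam0B⟩ :=
    exists_minimal_solution α μ P hα hμ hP B hBα hBclosed
  -- eigenvector supported on C
  classical
  set c : ℝ := ((Finset.univ.filter (fun i => i ∈ C)).card : ℝ) with hc
  have hcpos : 0 < c := by
    rw [hc]
    have : i₀ ∈ Finset.univ.filter (fun i => i ∈ C) := by
      simp [hi₀C]
    exact_mod_cast Finset.card_pos.mpr ⟨i₀, this⟩
  set Q : Matrix (Fin n) (Fin n) ℝ :=
    Matrix.of (fun i j => if i ∈ C then P i j else if j ∈ C then c⁻¹ else 0) with hQ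
  have hQrow : ∀ i, ∑ j, Q i j = 1 := by
    intro i
    by_cases hi : i ∈ C
    · simp only [hQ, Matrix.of_apply, if_pos hi]
      exact hrow1 i hi
    · simp only [hQ, Matrix.of_apply, if_neg hi]
      rw [Finset.sum_ite, Finset.sum_const, Finset.sum_const_zero, add_zero,
        nsmul_eq_mul, ← hc]
      exact mul_inv_cancel₀ hcpos.ne'
  -- determinant argument: 1 is a left eigenvalue of Q
  have hone : ∀ i : Fin n, ∑ j, (1 : Matrix (Fin n) (Fin n) ℝ) i j = 1 := by
    intro i
    simp [Matrix.one_apply]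
  have hdet : (Q - 1).det = 0 := by
    rw [← Matrix.exists_mulVec_eq_zero_iff]
    refine ⟨fun _ => (1 : ℝ), ?_, ?_⟩
    · intro h
      have := congrFun h i₀
      norm_num at this
    · funext i
      simp only [Matrix.mulVec, dotProduct, Matrix.sub_apply, mul_one,
        Finset.sum_sub_distrib, Pi.zero_apply]
      rw [hQrow i, hone i, sub_self]
  obtain ⟨w, hwne, hwQ⟩ := Matrix.exists_vecMul_eq_zero_iff.mpr hdet
  have hfix : ∀ i, ∑ j, w j * Q j i = w i := by
    intro i
    have := congrFun hwQ i
    simp only [Matrix.vecMul, dotProduct, Matrix.sub_apply, Pi.zero_apply,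
      mul_sub, Finset.sum_sub_distrib] at this
    have h1 : ∑ j, w j * (1 : Matrix (Fin n) (Fin n) ℝ) j i = w i := by
      rw [Finset.sum_eq_single i]
      · simp [Matrix.one_apply]
      · intro b _ hb
        simp [Matrix.one_apply, hb]
      · intro h
        exact absurd (Finset.mem_univ i) h
    rw [h1] at this
    linarith
  have hwC : ∀ j, j ∉ C → w j = 0 := by
    intro j hj
    rw [← hfix j, Finset.sum_eq_zero]
    intro i _
    by_cases hi : i ∈ C
    · rw [hQ]
      simp only [Matrix.of_apply, if_pos hi]
      rw [hout i hi j hj, mul_zero]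
    · rw [hQ]
      simp only [Matrix.of_apply, if_neg hi, if_neg hj, mul_zero]
  have hwP : ∀ i, ∑ j, w j * P j i = w i := by
    intro i
    rw [← hfix i]
    refine Finset.sum_congr rfl fun j _ => ?_
    by_cases hj : j ∈ C
    · rw [hQ]; simp only [Matrix.of_apply, if_pos hj]
    · rw [hwC j hj, zero_mul, zero_mul]
  -- pick coordinate with nonzero w; normalize sign
  obtain ⟨j₀, hj₀⟩ := Function.ne_iff.mp hwne
  simp only [Pi.zero_apply] at hj₀
  have hj₀C : j₀ ∈ C := by
    by_contra h
    exact hj₀ (hwC j₀ h)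
  set u : Fin n → ℝ := if w j₀ < 0 then w else -w with hu
  have huP : ∀ i, ∑ j, u j * P j i = u i := by
    intro i
    rw [hu]
    split
    · exact hwP i
    · simp only [Pi.neg_apply, neg_mul, Finset.sum_neg_distrib]
      rw [hwP i]
  have huC : ∀ j, j ∉ C → u j = 0 := by
    intro j hj
    rw [hu]
    split
    · exact hwC j hj
    · simp [hwC j hj]
  have huj₀ : u j₀ < 0 := by
    rw [hu]
    split
    · assumption
    · rename_i h
      have : 0 < w j₀ := lt_of_le_of_ne (not_lt.mp h) (Ne.symm hj₀)
      simpa using this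
  -- scaling
  have hune : Finset.univ.Nonempty := ⟨j₀, Finset.mem_univ j₀⟩
  set W : ℝ := Finset.univ.sup' hune (fun j => |u j|) with hWdef
  have hW : 0 < W := lt_of_lt_of_le (abs_pos.mpr huj₀.ne)
    (Finset.le_sup' (fun j => |u j|) (Finset.mem_univ j₀))
  set m : ℝ := Finset.univ.inf' hune μ with hmdef
  have hm : 0 < m := by
    rw [hmdef]
    exact (Finset.lt_inf'_iff hune).mpr fun j _ => hμ j
  have hmμ : ∀ j, m ≤ μ j := fun j => Finset.inf'_le μ (Finset.mem_univ j)
  set t : ℝ := m / W with ht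
  have htpos : 0 < t := div_pos hm hW
  refine ⟨fun i => lam0 i + t * u i, ?_, j₀, ?_⟩
  · intro i
    have hmin : ∀ j, min (lam0 j + t * u j) (μ j) = min (lam0 j) (μ j) + t * u j := by
      intro j
      by_cases hj : j ∈ C
      · rw [hlam0B j (hCB j hj), min_eq_left (hμ j).le, zero_add]
        refine min_eq_left ?_
        calc t * u j ≤ |t * u j| := le_abs_self _
          _ = t * |u j| := by rw [abs_mul, abs_of_pos htpos]
          _ ≤ t * W := by
              refine mul_le_mul_of_nonneg_left ?_ htpos.le
              exact Finset.le_sup' (fun j => |u j|) (Finset.mem_univ j)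
          _ = m := by rw [ht]; field_simp
          _ ≤ μ j := hmμ j
      · rw [huC j hj, mul_zero, add_zero, add_zero]
    calc lam0 i + t * u i
        = (α i + ∑ j, min (lam0 j) (μ j) * P j i) + t * ∑ j, u j * P j i := by
          rw [← hlam0eq i, huP i]
      _ = α i + ∑ j, (min (lam0 j) (μ j) + t * u j) * P j i := by
          rw [Finset.mul_sum, add_assoc, ← Finset.sum_add_distrib]
          congr 1
          refine Finset.sum_congr rfl fun j _ => ?_
          ring
      _ = α i + ∑ j, min (lam0 j + t * u j) (μ j) * P j i := by
          congr 1
          exact Finset.sum_congr rfl fun j _ => by rw [hmin j]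
  · show lam0 j₀ + t * u j₀ < 0
    rw [hlam0B j₀ (hCB j₀ hj₀C), zero_add]
    exact mul_neg_of_pos_of_neg htpos huj₀

lemma partB {n : ℕ} (α μ : Fin n → ℝ) (P : Matrix (Fin n) (Fin n) ℝ)
    (hα : ∀ i, 0 ≤ α i) (hμ : ∀ i, 0 < μ i)
    (hP : ∀ i j, 0 ≤ P i j) (hPsub : ∀ i, ∑ j, P i j ≤ 1)
    (hNI : NI α P) (lam : Fin n → ℝ)
    (hlam : ∀ i, lam i = α i + ∑ j, min (lam j) (μ j) * P j i) :
    ∀ i, 0 ≤ lam i := by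
  by_contra hcon
  push_neg at hcon
  obtain ⟨i₁, hi₁⟩ := hcon
  classical
  set D : Finset (Fin n) := Finset.univ.filter (fun i => lam i < 0) with hD
  have hmemD : ∀ i, i ∈ D ↔ lam i < 0 := by intro i; simp [hD]
  have hi₁D : i₁ ∈ D := (hmemD i₁).mpr hi₁
  set ν : Fin n → ℝ := fun j => min (lam j) (μ j) with hν
  set s : Fin n → ℝ := fun j => ∑ i ∈ D, P j i with hs
  have hs_nonneg : ∀ j, 0 ≤ s j := fun j => Finset.sum_nonneg fun i _ => hP j i
  have hs_le : ∀ j, s j ≤ 1 := fun j => le_trans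
    (Finset.sum_le_sum_of_subset_of_nonneg (Finset.subset_univ D) fun i _ _ => hP j i)
    (hPsub j)
  have hνD : ∀ j ∈ D, ν j = lam j := fun j hj =>
    min_eq_left (le_trans ((hmemD j).mp hj).le (hμ j).le)
  have hνnn : ∀ j, j ∉ D → 0 ≤ ν j := by
    intro j hj
    have : ¬ lam j < 0 := fun h => hj ((hmemD j).mpr h)
    exact le_min (not_lt.mp this) (hμ j).le
  have hident : ∑ i ∈ D, lam i = ∑ i ∈ D, α i + ∑ j, ν j * s j := by
    calc ∑ i ∈ D, lam i
        = ∑ i ∈ D, (α i + ∑ j, ν j * P j i) := Finset.sum_congr rfl fun i _ => hlam i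
      _ = ∑ i ∈ D, α i + ∑ i ∈ D, ∑ j, ν j * P j i := Finset.sum_add_distrib
      _ = ∑ i ∈ D, α i + ∑ j, ∑ i ∈ D, ν j * P j i := by rw [Finset.sum_comm]
      _ = ∑ i ∈ D, α i + ∑ j, ν j * s j := by
          congr 1
          exact Finset.sum_congr rfl fun j _ => (Finset.mul_sum _ _ _).symm
  have hsplit : ∑ j, ν j * s j = ∑ j ∈ D, ν j * s j + ∑ j ∈ Dᶜ, ν j * s j :=
    (Finset.sum_add_sum_compl D _).symm
  have hkey : 0 = ∑ i ∈ D, α i + ∑ j ∈ D, lam j * (s j - 1) + ∑ j ∈ Dᶜ, ν j * s j := by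
    have h1 : ∑ j ∈ D, ν j * s j = ∑ j ∈ D, lam j + ∑ j ∈ D, lam j * (s j - 1) := by
      rw [← Finset.sum_add_distrib]
      exact Finset.sum_congr rfl fun j hj => by rw [hνD j hj]; ring
    rw [hsplit, h1] at hident
    linarith
  have hterm2nn : ∀ j ∈ D, 0 ≤ lam j * (s j - 1) := by
    intro j hj
    have h1 : lam j ≤ 0 := ((hmemD j).mp hj).le
    have h2 : s j - 1 ≤ 0 := by linarith [hs_le j]
    nlinarith
  have hterm3nn : ∀ j ∈ Dᶜ, 0 ≤ ν j * s j := fun j hj =>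
    mul_nonneg (hνnn j (Finset.mem_compl.mp hj)) (hs_nonneg j)
  have hA : 0 ≤ ∑ i ∈ D, α i := Finset.sum_nonneg fun i _ => hα i
  have h2 : 0 ≤ ∑ j ∈ D, lam j * (s j - 1) := Finset.sum_nonneg hterm2nn
  have h3 : 0 ≤ ∑ j ∈ Dᶜ, ν j * s j := Finset.sum_nonneg hterm3nn
  have hAz : ∀ i ∈ D, α i = 0 := by
    have hz : ∑ i ∈ D, α i = 0 := by linarith
    exact fun i hi => (Finset.sum_eq_zero_iff_of_nonneg fun i _ => hα i).mp hz i hi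
  have hs1 : ∀ j ∈ D, s j = 1 := by
    have hz : ∑ j ∈ D, lam j * (s j - 1) = 0 := by linarith
    intro j hj
    have hterm := (Finset.sum_eq_zero_iff_of_nonneg hterm2nn).mp hz j hj
    have hlj : lam j ≠ 0 := ((hmemD j).mp hj).ne
    rcases mul_eq_zero.mp hterm with h | h
    · exact absurd h hlj
    · linarith [sub_eq_zero.mp h]
  have hν0 : ∀ j, j ∉ D → ν j * s j = 0 := by
    have hz : ∑ j ∈ Dᶜ, ν j * s j = 0 := by linarith
    exact fun j hj =>
      (Finset.sum_eq_zero_iff_of_nonneg hterm3nn).mp hz j (Finset.mem_compl.mpr hj)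
  -- structural facts
  have F1 : ∀ j ∈ D, ∀ i, i ∉ D → P j i = 0 := by
    intro j hj i hi
    have hDsum : ∑ i ∈ D, P j i = 1 := hs1 j hj
    have hcnn : ∀ i ∈ Dᶜ, 0 ≤ P j i := fun i _ => hP j i
    have htot := Finset.sum_add_sum_compl D (P j)
    have hz : ∑ i ∈ Dᶜ, P j i = 0 :=
      le_antisymm (by linarith [hPsub j]) (Finset.sum_nonneg hcnn)
    exact (Finset.sum_eq_zero_iff_of_nonneg hcnn).mp hz i (Finset.mem_compl.mpr hi)
  have hclose : ∀ (k : ℕ) (j i : Fin n), j ∈ D → 0 < (P ^ k) j i → i ∈ D := by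
    intro k
    induction k with
    | zero =>
        intro j i hj hpos
        rw [pow_zero, Matrix.one_apply] at hpos
        by_cases e : j = i
        · exact e ▸ hj
        · rw [if_neg e] at hpos; linarith
    | succ k ih =>
        intro j i hj hpos
        obtain ⟨m, h1, h2⟩ := pow_decomp_left P hP hpos
        have hmD : m ∈ D := by
          by_contra hm
          rw [F1 j hj m hm] at h1
          exact lt_irrefl 0 h1
        exact ih m i hmD h2
  have hν_zero_lam : ∀ j, j ∉ D → ν j = 0 → lam j = 0 := by
    intro j hj hvj
    have h0 : 0 ≤ lam j := not_lt.mp fun h => hj ((hmemD j).mpr h)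
    rcases h0.eq_or_lt with e | e
    · exact e.symm
    · exfalso
      have : 0 < ν j := lt_min e (hμ j)
      rw [hvj] at this
      exact lt_irrefl 0 this
  have hzero_eq : ∀ i, i ∉ D → lam i = 0 →
      α i = 0 ∧ ∀ m, m ∉ D → ν m * P m i = 0 := by
    intro i hi hli
    have h0 : ∑ m ∈ D, ν m * P m i = 0 :=
      Finset.sum_eq_zero fun m hm => by rw [F1 m hm i hi, mul_zero]
    have heq := hlam i
    rw [hli] at heq
    have hsplit2 : ∑ m, ν m * P m i = ∑ m ∈ D, ν m * P m i + ∑ m ∈ Dᶜ, ν m * P m i :=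
      (Finset.sum_add_sum_compl D _).symm
    rw [hsplit2, h0, zero_add] at heq
    have hnn : ∀ m ∈ Dᶜ, 0 ≤ ν m * P m i := fun m hm =>
      mul_nonneg (hνnn m (Finset.mem_compl.mp hm)) (hP m i)
    have hsum_nn : 0 ≤ ∑ m ∈ Dᶜ, ν m * P m i := Finset.sum_nonneg hnn
    have hsz : ∑ m ∈ Dᶜ, ν m * P m i = 0 := by linarith [hα i]
    exact ⟨by linarith [hα i], fun m hm =>
      (Finset.sum_eq_zero_iff_of_nonneg hnn).mp hsz m (Finset.mem_compl.mpr hm)⟩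
  have GoodStep : ∀ j i, 0 < P j i → (i ∈ D ∨ lam i = 0) → (j ∈ D ∨ lam j = 0) := by
    intro j i hji hi
    by_cases hjD : j ∈ D
    · exact Or.inl hjD
    right
    rcases hi with hiD | hil
    · have hsj : 0 < s j := lt_of_lt_of_le hji (Finset.single_le_sum (fun i _ => hP j i) hiD)
      have hprod := hν0 j hjD
      rcases mul_eq_zero.mp hprod with h | h
      · exact hν_zero_lam j hjD h
      · exact absurd h hsj.ne'
    · have hiD' : i ∉ D := fun hmem => by
        have := (hmemD i).mp hmem
        rw [hil] at this
        exact lt_irrefl 0 this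
      obtain ⟨_, h2⟩ := hzero_eq i hiD' hil
      rcases mul_eq_zero.mp (h2 j hjD) with h | h
      · exact hν_zero_lam j hjD h
      · exact absurd h hji.ne'
  have GoodPath : ∀ (k : ℕ) (j i : Fin n), 0 < (P ^ k) j i →
      (i ∈ D ∨ lam i = 0) → (j ∈ D ∨ lam j = 0) := by
    intro k
    induction k with
    | zero =>
        intro j i hpos hi
        rw [pow_zero, Matrix.one_apply] at hpos
        by_cases e : j = i
        · exact e ▸ hi
        · rw [if_neg e] at hpos; linarith
    | succ k ih =>
        intro j i hpos hi
        obtain ⟨m, h1, h2⟩ := pow_decomp_right P hP hpos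
        exact ih j m h1 (GoodStep m i h2 hi)
  have Goodα : ∀ j, (j ∈ D ∨ lam j = 0) → α j = 0 := by
    rintro j (hj | hj)
    · exact hAz j hj
    · by_cases hjD : j ∈ D
      · exact hAz j hjD
      · exact (hzero_eq j hjD hj).1
  -- find a minimal (closed) communicating class inside D
  set F : Fin n → Finset (Fin n) := fun i => Finset.univ.filter (fun j => Reach P i j) with hF
  obtain ⟨ist, histD, hmin⟩ := Finset.exists_min_image D (fun i => (F i).card) ⟨i₁, hi₁D⟩
  have hreachD : ∀ j, Reach P ist j → j ∈ D := by
    rintro j (rfl | ⟨k, hk, hpos⟩)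
    · exact histD
    · exact hclose k ist j histD hpos
  have hkey2 : ∀ j, Reach P ist j → Reach P j ist := by
    intro j hj
    by_contra hnj
    have hjD : j ∈ D := hreachD j hj
    have hsub : F j ⊆ F ist := by
      intro m hm
      simp only [hF, Finset.mem_filter, Finset.mem_univ, true_and] at hm ⊢
      exact Reach.trans' P hP hj hm
    have hss : F j ⊂ F ist := by
      refine (Finset.ssubset_iff_of_subset hsub).mpr ?_
      refine ⟨ist, ?_, ?_⟩
      · simp only [hF, Finset.mem_filter, Finset.mem_univ, true_and]
        exact Reach.refl P ist
      · simp only [hF, Finset.mem_filter, Finset.mem_univ, true_and]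
        exact hnj
    exact (Finset.card_lt_card hss).not_ge (hmin j hjD)
  set Cls : Set (Fin n) := {j | Communicates P ist j} with hCls
  have hCC : IsCommClass P Cls := ⟨ist, rfl⟩
  have hClsD : ∀ j, j ∈ Cls → j ∈ D := fun j hj => hreachD j (comm_to_reach P hj)
  rcases hNI Cls hCC with hfill | hdrain
  · rcases hfill with ⟨i, hiC, hαi⟩ | ⟨j, hαj, l, hlC, k, hk, hpos⟩
    · rw [hAz i (hClsD i hiC)] at hαi
      exact lt_irrefl 0 hαi
    · have hgood : j ∈ D ∨ lam j = 0 := GoodPath k j l hpos (Or.inl (hClsD l hlC))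
      rw [Goodα j hgood] at hαj
      exact lt_irrefl 0 hαj
  · rcases hdrain with ⟨i, hiC, hlt⟩ | ⟨i, hiC, j, hjC, hPij⟩
    · have hiD := hClsD i hiC
      have h1 : s i = 1 := hs1 i hiD
      have hle : s i ≤ ∑ m, P i m :=
        Finset.sum_le_sum_of_subset_of_nonneg (Finset.subset_univ D) fun m _ _ => hP i m
      rw [h1] at hle
      linarith
    · have hri : Reach P ist i := comm_to_reach P hiC
      have hrj : Reach P ist j := Reach.trans' P hP hri (reach_of_edge P hPij)
      exact hjC (comm_of_reach P hrj (hkey2 j hrj))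

end TEaux

/-- if the network contains an isolated class then the traffic
equation has a solution with a strictly negative entry; consequently NI is
equivalent to all solutions being nonnegative. -/
theorem isolated_class_negative_solution_and_NI_iff (n : ℕ)
    (α μ : Fin n → ℝ) (P : Matrix (Fin n) (Fin n) ℝ)
    (hα : ∀ i, 0 ≤ α i) (hμ : ∀ i, 0 < μ i)
    (hP : ∀ i j, 0 ≤ P i j) (hPsub : ∀ i, ∑ j, P i j ≤ 1) :
    ((∃ C, IsCommClass P C ∧ ¬ CanBeFilled α P C ∧ ¬ CanBeDrained P C) →
      ∃ lam : Fin n → ℝ,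
        (∀ i, lam i = α i + ∑ j, min (lam j) (μ j) * P j i) ∧ ∃ i, lam i < 0) ∧
    (NI α P ↔
      ∀ lam : Fin n → ℝ,
        (∀ i, lam i = α i + ∑ j, min (lam j) (μ j) * P j i) → ∀ i, 0 ≤ lam i) := by
  constructor
  · rintro ⟨C, hC, hF, hD⟩
    exact TEaux.partA α μ P hα hμ hP hPsub C hC hF hD
  · constructor
    · intro hNI lam hlam
      exact TEaux.partB α μ P hα hμ hP hPsub hNI lam hlam
    · intro h
      intro C hC
      by_contra hcon
      push_neg at hcon
      obtain ⟨lam, hlam, i, hneg⟩ :=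
        TEaux.partA α μ P hα hμ hP hPsub C hC hcon.1 hcon.2
      exact absurd (h lam hlam i) (not_le.mpr hneg)
end

section
/- Consider the overflow network (α, μ, P, Q) and suppose (α, μ, P) is non-isolated with λ* the unique nonnegative solution of λ* = α + (λ* ∧ μ)P. If λ is any solution of the overflow traffic equation λ = α + (λ ∧ μ)P + (λ − μ)⁺ Q, then λ ≥ λ* ≥ 0 entrywise. -/
open scoped Classical

lemma pow_entry_nonneg {n : ℕ} (P : Matrix (Fin n) (Fin n) ℝ)
    (hP : ∀ i j, 0 ≤ P i j) : ∀ k i j, 0 ≤ (P ^ k) i j := by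
  intro k
  induction k with
  | zero => intro i j; simp [Matrix.one_apply]; split <;> norm_num
  | succ k ih =>
    intro i j
    rw [pow_succ, Matrix.mul_apply]
    exact Finset.sum_nonneg fun m _ => mul_nonneg (ih i m) (hP m j)

lemma pow_succ_pos_exists {n : ℕ} (P : Matrix (Fin n) (Fin n) ℝ)
    (hP : ∀ i j, 0 ≤ P i j) (k : ℕ) (i j : Fin n)
    (h : 0 < (P ^ (k + 1)) i j) : ∃ m, 0 < P i m ∧ 0 < (P ^ k) m j := by
  rw [pow_succ', Matrix.mul_apply] at h
  by_contra hc
  push_neg at hc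
  have : ∑ m, P i m * (P ^ k) m j ≤ 0 := by
    apply Finset.sum_nonpos
    intro m _
    rcases lt_or_ge 0 (P i m) with h1 | h1
    · exact mul_nonpos_of_nonneg_of_nonpos (hP i m) (hc m h1)
    · exact mul_nonpos_of_nonpos_of_nonneg h1 (pow_entry_nonneg P hP k m j)
  linarith

lemma reach_trans {n : ℕ} (P : Matrix (Fin n) (Fin n) ℝ)
    (hP : ∀ i j, 0 ≤ P i j) {i j m : Fin n} {k l : ℕ}
    (h1 : 0 < (P ^ k) i j) (h2 : 0 < (P ^ l) j m) : 0 < (P ^ (k + l)) i m := by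
  rw [pow_add, Matrix.mul_apply]
  calc (0:ℝ) < (P ^ k) i j * (P ^ l) j m := mul_pos h1 h2
    _ ≤ ∑ t, (P ^ k) i t * (P ^ l) t m :=
      Finset.single_le_sum
        (fun t _ => mul_nonneg (pow_entry_nonneg P hP k i t) (pow_entry_nonneg P hP l t m))
        (Finset.mem_univ j)

lemma min_sub_min_bounds (a b c : ℝ) (h : a ≤ b) :
    0 ≤ min b c - min a c ∧ min b c - min a c ≤ b - a := by
  constructor <;> · simp only [min_def]; split_ifs <;> linarith

/-- any solution of the overflow traffic equation dominates the
(nonnegative) solution of the non-overflow traffic equation. -/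
theorem overflow_solution_dominates (n : ℕ)
    (α μ lamStar lam : Fin n → ℝ) (P Q : Matrix (Fin n) (Fin n) ℝ)
    (hα : ∀ i, 0 ≤ α i) (hμ : ∀ i, 0 < μ i)
    (hP : ∀ i j, 0 ≤ P i j) (hPsub : ∀ i, ∑ j, P i j ≤ 1)
    (hQ : ∀ i j, 0 ≤ Q i j) (hQsub : ∀ i, ∑ j, Q i j ≤ 1)
    (hNI : NI α P)
    (hstar_nonneg : ∀ i, 0 ≤ lamStar i)
    (hstar : ∀ i, lamStar i = α i + ∑ j, min (lamStar j) (μ j) * P j i)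
    (heq : ∀ i, lam i = α i + ∑ j, min (lam j) (μ j) * P j i
      + ∑ j, max (lam j - μ j) 0 * Q j i) :
    ∀ i, lamStar i ≤ lam i := by
  by_contra hcon
  push_neg at hcon
  obtain ⟨i00, hi00⟩ := hcon
  set S : Finset (Fin n) := Finset.univ.filter (fun i => lam i < lamStar i) with hSdef
  have hmemS : ∀ i, i ∈ S ↔ lam i < lamStar i := by
    intro i; simp [hSdef]
  have hSne : S.Nonempty := ⟨i00, (hmemS i00).mpr hi00⟩
  set g : Fin n → ℝ := fun j => min (lamStar j) (μ j) - min (lam j) (μ j) with hgdef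
  set s1 : Fin n → ℝ := fun j => ∑ i ∈ S, P j i with hs1def
  have hs1nn : ∀ j, 0 ≤ s1 j := fun j => Finset.sum_nonneg fun i _ => hP j i
  have hs1le : ∀ j, s1 j ≤ 1 := by
    intro j
    have h1 : ∑ i ∈ S, P j i ≤ ∑ i, P j i :=
      Finset.sum_le_sum_of_subset_of_nonneg (Finset.filter_subset _ _)
        (fun i _ _ => hP j i)
    exact le_trans h1 (hPsub j)
  have hgS : ∀ j ∈ S, 0 ≤ g j ∧ g j ≤ lamStar j - lam j := by
    intro j hj
    exact min_sub_min_bounds (lam j) (lamStar j) (μ j) ((hmemS j).mp hj).le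
  have hgnp : ∀ j, j ∉ S → g j ≤ 0 := by
    intro j hj
    have h1 : lamStar j ≤ lam j := le_of_not_gt (fun h => hj ((hmemS j).mpr h))
    have := (min_sub_min_bounds (lamStar j) (lam j) (μ j) h1).1
    simp only [hgdef]
    linarith
  have hdiff : ∀ i, lamStar i - lam i
      = (∑ j, g j * P j i) - ∑ j, max (lam j - μ j) 0 * Q j i := by
    intro i
    have h3 : ∑ j, g j * P j i
        = ∑ j, min (lamStar j) (μ j) * P j i - ∑ j, min (lam j) (μ j) * P j i := by
      rw [← Finset.sum_sub_distrib]
      apply Finset.sum_congr rfl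
      intro j _
      simp only [hgdef]
      ring
    rw [h3, hstar i, heq i]
    ring
  -- the summation chain
  have hA_le : ∑ i ∈ S, (lamStar i - lam i) ≤ ∑ i ∈ S, ∑ j, g j * P j i := by
    apply Finset.sum_le_sum
    intro i _
    rw [hdiff i]
    have h0 : 0 ≤ ∑ j, max (lam j - μ j) 0 * Q j i :=
      Finset.sum_nonneg fun j _ => mul_nonneg (le_max_right _ _) (hQ j i)
    linarith
  have hswap : ∑ i ∈ S, ∑ j, g j * P j i = ∑ j, g j * s1 j := by
    rw [Finset.sum_comm]
    apply Finset.sum_congr rfl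
    intro j _
    simp only [hs1def]
    exact (Finset.mul_sum S (fun i => P j i) (g j)).symm
  have hsplit : ∑ j, g j * s1 j ≤ ∑ j ∈ S, g j * s1 j := by
    rw [← Finset.sum_filter_add_sum_filter_not Finset.univ
      (fun i => lam i < lamStar i) (fun j => g j * s1 j), ← hSdef]
    have h0 : ∑ j ∈ Finset.univ.filter (fun i => ¬ lam i < lamStar i),
        g j * s1 j ≤ 0 := by
      apply Finset.sum_nonpos
      intro j hj
      have hjns : j ∉ S := by
        simp only [Finset.mem_filter, Finset.mem_univ, true_and] at hj
        exact fun h => hj ((hmemS j).mp h)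
      exact mul_nonpos_of_nonpos_of_nonneg (hgnp j hjns) (hs1nn j)
    linarith
  have hB2A : ∑ j ∈ S, g j * s1 j ≤ ∑ j ∈ S, (lamStar j - lam j) := by
    apply Finset.sum_le_sum
    intro j hj
    obtain ⟨hg0, hgz⟩ := hgS j hj
    nlinarith [hs1le j, hs1nn j]
  have hall_eq : ∑ j ∈ S, (lamStar j - lam j) = ∑ j ∈ S, g j * s1 j := by
    have h1 : ∑ j ∈ S, (lamStar j - lam j) ≤ ∑ j ∈ S, g j * s1 j := by
      calc ∑ j ∈ S, (lamStar j - lam j) ≤ ∑ i ∈ S, ∑ j, g j * P j i := hA_le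
        _ = ∑ j, g j * s1 j := hswap
        _ ≤ ∑ j ∈ S, g j * s1 j := hsplit
    linarith
  have hterm : ∀ j ∈ S, lamStar j - lam j - g j * s1 j = 0 := by
    apply (Finset.sum_eq_zero_iff_of_nonneg ?_).mp
    · rw [Finset.sum_sub_distrib]
      linarith
    · intro j hj
      obtain ⟨hg0, hgz⟩ := hgS j hj
      nlinarith [hs1le j, hs1nn j]
  -- consequences on S
  have hSfacts : ∀ j ∈ S, s1 j = 1 ∧ lamStar j ≤ μ j := by
    intro j hj
    have hjlt := (hmemS j).mp hj
    have ht := hterm j hj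
    obtain ⟨hg0, hgz⟩ := hgS j hj
    have hs_eq : s1 j = 1 := by
      have h2 : 1 ≤ s1 j := by nlinarith [hs1le j, hs1nn j]
      linarith [hs1le j]
    have hg_eq : g j = lamStar j - lam j := by
      rw [hs_eq] at ht; linarith
    refine ⟨hs_eq, ?_⟩
    simp only [hgdef, min_def] at hg_eq
    split_ifs at hg_eq <;> linarith [hμ j]
  have hPclosed : ∀ j ∈ S, ∀ i, i ∉ S → P j i = 0 := by
    intro j hj i hi
    have hrow := Finset.sum_filter_add_sum_filter_not Finset.univ
      (fun i => lam i < lamStar i) (fun i => P j i)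
    rw [← hSdef] at hrow
    have hS1 : ∑ i ∈ S, P j i = 1 := (hSfacts j hj).1
    have htail_nn : ∀ i ∈ Finset.univ.filter (fun i => ¬ lam i < lamStar i),
        0 ≤ P j i := fun i _ => hP j i
    have htail0 : ∑ i ∈ Finset.univ.filter (fun i => ¬ lam i < lamStar i),
        P j i = 0 := by
      have := hPsub j
      have h1 : 0 ≤ ∑ i ∈ Finset.univ.filter (fun i => ¬ lam i < lamStar i), P j i :=
        Finset.sum_nonneg htail_nn
      linarith
    have := (Finset.sum_eq_zero_iff_of_nonneg htail_nn).mp htail0 i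
      (by simp only [Finset.mem_filter, Finset.mem_univ, true_and]
          exact fun h => hi ((hmemS i).mpr h))
    exact this
  have hrow1 : ∀ j ∈ S, ∑ i, P j i = 1 := by
    intro j hj
    have hrow := Finset.sum_filter_add_sum_filter_not Finset.univ
      (fun i => lam i < lamStar i) (fun i => P j i)
    rw [← hSdef] at hrow
    have hS1 : ∑ i ∈ S, P j i = 1 := (hSfacts j hj).1
    have htail0 : ∑ i ∈ Finset.univ.filter (fun i => ¬ lam i < lamStar i),
        P j i = 0 := by
      apply (Finset.sum_eq_zero_iff_of_nonneg (fun i _ => hP j i)).mpr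
      intro i hi
      simp only [Finset.mem_filter, Finset.mem_univ, true_and] at hi
      exact hPclosed j hj i (fun h => hi ((hmemS i).mp h))
    rw [← hrow, hS1, htail0]
    norm_num
  -- reachability
  have hstepS : ∀ i ∈ S, ∀ j, 0 < P i j → j ∈ S := by
    intro i hi j hpos
    by_contra hj
    rw [hPclosed i hi j hj] at hpos
    exact lt_irrefl 0 hpos
  have hpowS : ∀ k, ∀ i ∈ S, ∀ j, 0 < (P ^ k) i j → j ∈ S := by
    intro k
    induction k with
    | zero =>
      intro i hi j hpos
      rw [pow_zero, Matrix.one_apply] at hpos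
      split at hpos
      · rename_i h; rw [← h]; exact hi
      · exact absurd hpos (lt_irrefl 0)
    | succ k ih =>
      intro i hi j hpos
      obtain ⟨m, h1, h2⟩ := pow_succ_pos_exists P hP k i j hpos
      exact ih m (hstepS i hi m h1) j h2
  set R : Fin n → Fin n → Prop := fun i j => ∃ k ≥ 1, 0 < (P ^ k) i j with hRdef
  have hRtrans : ∀ i j m, R i j → R j m → R i m := by
    rintro i j m ⟨k, hk, hkp⟩ ⟨l, hl, hlp⟩
    exact ⟨k + l, le_trans hk (Nat.le_add_right k l), reach_trans P hP hkp hlp⟩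
  have hRstep : ∀ i j, 0 < P i j → R i j := by
    intro i j h
    exact ⟨1, le_refl 1, by simpa using h⟩
  have hRS : ∀ i ∈ S, ∀ j, R i j → j ∈ S := by
    rintro i hi j ⟨k, _, hk⟩
    exact hpowS k i hi j hk
  -- maximal element
  set F : Fin n → ℕ := fun j => (Finset.univ.filter (fun m => j = m ∨ R j m)).card
    with hFdef
  obtain ⟨i0, hi0S, hi0min⟩ := S.exists_min_image F hSne
  have hmax : ∀ j, R i0 j → R j i0 := by
    intro j hj
    have hjS : j ∈ S := hRS i0 hi0S j hj
    have hsub : Finset.univ.filter (fun m => j = m ∨ R j m)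
        ⊆ Finset.univ.filter (fun m => i0 = m ∨ R i0 m) := by
      intro m hm
      simp only [Finset.mem_filter, Finset.mem_univ, true_and] at hm ⊢
      rcases hm with h | h
      · exact Or.inr (h ▸ hj)
      · exact Or.inr (hRtrans i0 j m hj h)
    have hcard : F i0 ≤ F j := hi0min j hjS
    have heqset := Finset.eq_of_subset_of_card_le hsub hcard
    have : i0 ∈ Finset.univ.filter (fun m => j = m ∨ R j m) := by
      rw [heqset]
      simp
    simp only [Finset.mem_filter, Finset.mem_univ, true_and] at this
    rcases this with h | h
    · exact h ▸ hj
    · exact h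
  -- the communicating class
  set C : Set (Fin n) := {j | Communicates P i0 j} with hCdef
  have hCclass : IsCommClass P C := ⟨i0, rfl⟩
  have hCS : ∀ j ∈ C, j ∈ S := by
    intro j hj
    rcases hj with h | ⟨h1, _⟩
    · exact h ▸ hi0S
    · exact hRS i0 hi0S j h1
  have hi0C : i0 ∈ C := Or.inl rfl
  have hCclosed : ∀ i ∈ C, ∀ j, 0 < P i j → j ∈ C := by
    intro i hi j hpos
    have hRij : R i0 j := by
      rcases hi with h | ⟨h1, _⟩
      · exact h ▸ hRstep i j hpos
      · exact hRtrans i0 i j h1 (hRstep i j hpos)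
    exact Or.inr ⟨hRij, hmax j hRij⟩
  have hCout : ∀ i ∈ C, ∀ j, j ∉ C → P i j = 0 := by
    intro i hi j hj
    by_contra h
    have : 0 < P i j := lt_of_le_of_ne (hP i j) (Ne.symm h)
    exact hj (hCclosed i hi j this)
  -- C cannot be drained
  have hnotdrain : ¬ CanBeDrained P C := by
    rintro (⟨i, hiC, hlt⟩ | ⟨i, hiC, j, hjC, hpos⟩)
    · rw [hrow1 i (hCS i hiC)] at hlt
      exact lt_irrefl 1 hlt
    · exact hjC (hCclosed i hiC j hpos)
  have hfill : CanBeFilled α P C := (hNI C hCclass).resolve_right hnotdrain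
  -- flow balance on C
  set Cf : Finset (Fin n) := Finset.univ.filter (fun j => j ∈ C) with hCfdef
  have hmemCf : ∀ j, j ∈ Cf ↔ j ∈ C := by intro j; simp [hCfdef]
  have hbal : ∑ i ∈ Cf, lamStar i
      = ∑ i ∈ Cf, α i + ∑ j, min (lamStar j) (μ j) * (∑ i ∈ Cf, P j i) := by
    calc ∑ i ∈ Cf, lamStar i
        = ∑ i ∈ Cf, (α i + ∑ j, min (lamStar j) (μ j) * P j i) :=
          Finset.sum_congr rfl (fun i _ => hstar i)
      _ = ∑ i ∈ Cf, α i + ∑ i ∈ Cf, ∑ j, min (lamStar j) (μ j) * P j i :=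
          Finset.sum_add_distrib
      _ = ∑ i ∈ Cf, α i + ∑ j, ∑ i ∈ Cf, min (lamStar j) (μ j) * P j i := by
          rw [Finset.sum_comm]
      _ = ∑ i ∈ Cf, α i + ∑ j, min (lamStar j) (μ j) * (∑ i ∈ Cf, P j i) := by
          congr 1
          exact Finset.sum_congr rfl (fun j _ =>
            (Finset.mul_sum Cf (fun i => P j i) (min (lamStar j) (μ j))).symm)
  have hCfsum1 : ∀ j ∈ Cf, ∑ i ∈ Cf, P j i = 1 := by
    intro j hj
    have hjC := (hmemCf j).mp hj
    have hrow := Finset.sum_filter_add_sum_filter_not Finset.univ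
      (fun i => i ∈ C) (fun i => P j i)
    rw [← hCfdef] at hrow
    have htail0 : ∑ i ∈ Finset.univ.filter (fun i => ¬ i ∈ C), P j i = 0 := by
      apply (Finset.sum_eq_zero_iff_of_nonneg (fun i _ => hP j i)).mpr
      intro i hi
      simp only [Finset.mem_filter, Finset.mem_univ, true_and] at hi
      exact hCout j hjC i hi
    have := hrow1 j (hCS j hjC)
    rw [← hrow, htail0] at this
    linarith
  have hminstar : ∀ j, 0 ≤ min (lamStar j) (μ j) := fun j =>
    le_min (hstar_nonneg j) (hμ j).le
  have hsplitC : ∑ j, min (lamStar j) (μ j) * (∑ i ∈ Cf, P j i)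
      = ∑ j ∈ Cf, lamStar j
        + ∑ j ∈ Finset.univ.filter (fun j => ¬ j ∈ C),
            min (lamStar j) (μ j) * (∑ i ∈ Cf, P j i) := by
    rw [← Finset.sum_filter_add_sum_filter_not Finset.univ (fun j => j ∈ C)
      (fun j => min (lamStar j) (μ j) * (∑ i ∈ Cf, P j i)), ← hCfdef]
    congr 1
    apply Finset.sum_congr rfl
    intro j hj
    have hjC := (hmemCf j).mp hj
    rw [hCfsum1 j hj, mul_one, min_eq_left (hSfacts j (hCS j hjC)).2]
  have hzero : (∑ i ∈ Cf, α i)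
      + ∑ j ∈ Finset.univ.filter (fun j => ¬ j ∈ C),
          min (lamStar j) (μ j) * (∑ i ∈ Cf, P j i) = 0 := by
    rw [hsplitC] at hbal
    linarith
  have hαnn : 0 ≤ ∑ i ∈ Cf, α i := Finset.sum_nonneg fun i _ => hα i
  have hTnn : 0 ≤ ∑ j ∈ Finset.univ.filter (fun j => ¬ j ∈ C),
      min (lamStar j) (μ j) * (∑ i ∈ Cf, P j i) :=
    Finset.sum_nonneg fun j _ => mul_nonneg (hminstar j)
      (Finset.sum_nonneg fun i _ => hP j i)
  have hαC : ∀ i ∈ C, α i = 0 := by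
    intro i hi
    have hs0 : ∑ i ∈ Cf, α i = 0 := by linarith
    exact (Finset.sum_eq_zero_iff_of_nonneg (fun i _ => hα i)).mp hs0 i
      ((hmemCf i).mpr hi)
  have hcross : ∀ j, j ∉ C → min (lamStar j) (μ j) * (∑ i ∈ Cf, P j i) = 0 := by
    intro j hj
    have hs0 : ∑ j ∈ Finset.univ.filter (fun j => ¬ j ∈ C),
        min (lamStar j) (μ j) * (∑ i ∈ Cf, P j i) = 0 := by linarith
    exact (Finset.sum_eq_zero_iff_of_nonneg (fun j _ => mul_nonneg (hminstar j)
      (Finset.sum_nonneg fun i _ => hP j i))).mp hs0 j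
      (by simp only [Finset.mem_filter, Finset.mem_univ, true_and]; exact hj)
  have hminzero : ∀ j, min (lamStar j) (μ j) = 0 → lamStar j = 0 := by
    intro j h
    rcases min_cases (lamStar j) (μ j) with ⟨h1, _⟩ | ⟨h1, _⟩
    · rw [h1] at h; exact h
    · rw [h1] at h; exact absurd h (ne_of_gt (hμ j))
  have hout : ∀ i ∈ C, ∀ j, 0 < P j i → j ∈ C ∨ lamStar j = 0 := by
    intro i hi j hpos
    by_cases hjC : j ∈ C
    · exact Or.inl hjC
    · right
      have hc := hcross j hjC
      have hc2 : 0 < ∑ i ∈ Cf, P j i := by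
        calc (0:ℝ) < P j i := hpos
          _ ≤ ∑ i ∈ Cf, P j i :=
            Finset.single_le_sum (fun i _ => hP j i) ((hmemCf i).mpr hi)
      have : min (lamStar j) (μ j) = 0 := by
        rcases mul_eq_zero.mp hc with h | h
        · exact h
        · exact absurd h (ne_of_gt hc2)
      exact hminzero j this
  have hprop : ∀ i, lamStar i = 0 → α i = 0 ∧ ∀ j, 0 < P j i → lamStar j = 0 := by
    intro i h0
    have hst := hstar i
    rw [h0] at hst
    have hsnn : 0 ≤ ∑ j, min (lamStar j) (μ j) * P j i :=
      Finset.sum_nonneg fun j _ => mul_nonneg (hminstar j) (hP j i)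
    have hα0 : α i = 0 := by linarith [hα i]
    have hsum0 : ∑ j, min (lamStar j) (μ j) * P j i = 0 := by linarith [hα i]
    refine ⟨hα0, ?_⟩
    intro j hpos
    have := (Finset.sum_eq_zero_iff_of_nonneg
      (fun j _ => mul_nonneg (hminstar j) (hP j i))).mp hsum0 j (Finset.mem_univ j)
    rcases mul_eq_zero.mp this with h | h
    · exact hminzero j h
    · exact absurd h (ne_of_gt hpos)
  have hback : ∀ k, ∀ j l, (l ∈ C ∨ lamStar l = 0) → 0 < (P ^ k) j l →
      j ∈ C ∨ lamStar j = 0 := by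
    intro k
    induction k with
    | zero =>
      intro j l hl hpos
      rw [pow_zero, Matrix.one_apply] at hpos
      split at hpos
      · rename_i h; exact h ▸ hl
      · exact absurd hpos (lt_irrefl 0)
    | succ k ih =>
      intro j l hl hpos
      obtain ⟨m, h1, h2⟩ := pow_succ_pos_exists P hP k j l hpos
      rcases ih m l hl h2 with hm | hm
      · exact hout m hm j h1
      · exact Or.inr ((hprop m hm).2 j h1)
  -- contradiction with fillability
  rcases hfill with ⟨i, hiC, hαpos⟩ | ⟨j, hαj, l, hlC, k, hk, hpk⟩
  · rw [hαC i hiC] at hαpos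
    exact lt_irrefl 0 hαpos
  · rcases hback k j l (Or.inl hlC) hpk with hjC | hj0
    · rw [hαC j hjC] at hαj
      exact lt_irrefl 0 hαj
    · rw [(hprop j hj0).1] at hαj
      exact lt_irrefl 0 hαj
end
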